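/- With the pointwise hypersurface model below, suppose δ = 0, μ = 0, L = c, and the structure Jacobi operator l is pseudo-parallel with function value L. Then c = 0. (This is the final step of Lemma 4.2: on the set where L = c, the pseudo-parallelism condition with X = ξ and Y = Z = φU forces c = 0, a contradiction.) -/

import Mathlib

open scoped RealInnerProductSpace

/-- Final step of Lemma 4.2: if `δ = 0`, `μ = 0`, `L = c` and the structure Jacobi operator is
pseudo-parallel with function value `L`, then `c = 0`. -/
theorem pseudo_parallel_L_eq_c_forces_c_zero
    {V : Type*} [NormedAddCommGroup V] [InnerProductSpace ℝ V]
    (hdim : Module.finrank ℝ V = 3)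
    (u w x : V) (hon : Orthonormal ℝ ![u, w, x])
    (φ : V →ₗ[ℝ] V) (hφu : φ u = w) (hφw : φ w = -u) (hφx : φ x = 0)
    (A : V →ₗ[ℝ] V) (hA : ∀ X Y : V, ⟪A X, Y⟫ = ⟪X, A Y⟫)
    (α β γ δ μ c L : ℝ)
    (hAu : A u = γ • u + δ • w + β • x)
    (hAw : A w = δ • u + μ • w)
    (hAx : A x = α • x + β • u)
    (R : V → V → V → V)
    (hR : ∀ X Y Z : V, R X Y Z =
      (c / 4) • (⟪Y, Z⟫ • X - ⟪X, Z⟫ • Y + ⟪φ Y, Z⟫ • φ X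
        - ⟪φ X, Z⟫ • φ Y - (2 * ⟪φ X, Y⟫) • φ Z)
      + ⟪A Y, Z⟫ • A X - ⟪A X, Z⟫ • A Y)
    (l : V → V) (hl : ∀ X : V, l X = R X x x)
    (hpp : ∀ X Y Z : V,
      R X Y (l Z) - l (R X Y Z)
        = L • ((⟪Y, l Z⟫ • X - ⟪l Z, X⟫ • Y)
            - l (⟪Y, Z⟫ • X - ⟪Z, X⟫ • Y)))
    (hδ : δ = 0)
    (hμ : μ = 0)
    (hLc : L = c) :
    c = 0 := by
  subst hδ hμ
  rw [← hLc]
  subst hLc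
  -- inner product facts
  have hortho := hon
  rw [orthonormal_iff_ite] at hortho
  have huu : ⟪u, u⟫ = 1 := by simpa using hortho 0 0
  have hww : ⟪w, w⟫ = 1 := by simpa using hortho 1 1
  have hxx : ⟪x, x⟫ = 1 := by simpa using hortho 2 2
  have huw : ⟪u, w⟫ = 0 := by simpa using hortho 0 1
  have hwu : ⟪w, u⟫ = 0 := by simpa using hortho 1 0
  have hux : ⟪u, x⟫ = 0 := by simpa using hortho 0 2
  have hxu : ⟪x, u⟫ = 0 := by simpa using hortho 2 0
  have hwx : ⟪w, x⟫ = 0 := by simpa using hortho 1 2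
  have hxw : ⟪x, w⟫ = 0 := by simpa using hortho 2 1
  have hxn : ‖x‖ = 1 := by simpa using hon.1 2
  have hwn : ‖w‖ = 1 := by simpa using hon.1 1
  have hAw0 : A w = 0 := by rw [hAw]; simp
  have hlw : l w = (L / 4) • w := by
    rw [hl, hR, hAw0, hAx]
    simp [hφx, hφw, real_inner_smul_left, real_inner_smul_right,
      inner_add_left, inner_add_right, hxx, hwx, hxu, hwu, hxw, hux, huw, huu, hww, hxn, hwn]
  have hlx : l x = 0 := by
    rw [hl, hR]
    simp [hφx]
  have key := hpp x w w
  rw [hlw, hww, hwx] at key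
  have harg : (1:ℝ) • x - (0:ℝ) • w = x := by simp
  rw [harg, hlx] at key
  have hR1 : R x w ((L / 4) • w) = (L ^ 2 / 16) • x := by
    rw [hR, hAw0, hAx]
    simp [hφx, hφw, real_inner_smul_left, real_inner_smul_right,
      inner_add_left, inner_add_right, hxx, hwx, hxu, hwu, hxw, hux, huw, huu, hww,
      smul_smul, hxn, hwn]
    module
  have hRxww : R x w w = (L / 4) • x := by
    rw [hR, hAw0, hAx]
    simp [hφx, hφw, real_inner_smul_left, real_inner_smul_right,
      inner_add_left, inner_add_right, hxx, hwx, hxu, hwu, hxw, hux, huw, huu, hww, hxn, hwn]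
  have hl2 : l ((L / 4) • x) = 0 := by
    rw [hl, hR]
    simp [hφx, real_inner_smul_left, real_inner_smul_right, map_smul, smul_smul]
    module
  rw [hR1, hRxww, hl2] at key
  have hinner : ⟪w, (L / 4) • w⟫ = L / 4 := by
    rw [real_inner_smul_right, hww]; ring
  have hinner2 : ⟪(L / 4) • w, x⟫ = 0 := by
    rw [real_inner_smul_left, hwx]; simp
  rw [hinner, hinner2] at key
  have key2 : (L ^ 2 / 16 - L * (L / 4)) • x = 0 := by
    linear_combination (norm := module) key
  have hx0 : x ≠ 0 := by
    intro h
    rw [h, inner_zero_left] at hxx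
    norm_num at hxx
  have ht : L ^ 2 / 16 - L * (L / 4) = 0 := by
    have h := congrArg (fun v => (⟪v, x⟫ : ℝ)) key2
    simpa [real_inner_smul_left, hxx, hx0] using h
  have hsq : L ^ 2 = 0 := by linear_combination (-16/3 : ℝ) * ht
  exact pow_eq_zero_iff (by norm_num) |>.mp hsq
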